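/- Let f be differentiable with L-Lipschitz gradient, g : ℝ^n → ℝ convex, and suppose 0 < s ≤ α ≤ 1/L with sL < 1. With y = prox_{sg}(x - s∇f(x)) and x⁺ = prox_{αg}(x - α∇f(y)), one has F(x) - F(x⁺) ≥ (1/(2α))‖x - x⁺‖², where F = f + g. -/

import Mathlib

open scoped RealInnerProductSpace

theorem prox_subgrad {n : ℕ} (g : EuclideanSpace ℝ (Fin n) → ℝ) (hg : ConvexOn ℝ Set.univ g)
    (c : ℝ) (hc : 0 < c) (m z : EuclideanSpace ℝ (Fin n))
    (hm : ∀ w, g m + ‖m - z‖ ^ 2 / (2 * c) ≤ g w + ‖w - z‖ ^ 2 / (2 * c))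
    (w : EuclideanSpace ℝ (Fin n)) :
    g m ≤ g w + ⟪m - z, w - m⟫ / c := by
  set I : ℝ := ⟪m - z, w - m⟫ with hI
  set Q : ℝ := ‖w - m‖ ^ 2 with hQ
  have hQ0 : 0 ≤ Q := by positivity
  have key : ∀ t : ℝ, 0 < t → t ≤ 1 → g m ≤ g w + I / c + t * (Q / (2 * c)) := by
    intro t ht0 ht1
    have hwt := hm ((1 - t) • m + t • w)
    have hconv : g ((1 - t) • m + t • w) ≤ (1 - t) * g m + t * g w := by
      have := hg.2 (Set.mem_univ m) (Set.mem_univ w) (by linarith : (0:ℝ) ≤ 1 - t)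
        (le_of_lt ht0) (by ring)
      simpa [smul_eq_mul] using this
    have hnorm : ‖(1 - t) • m + t • w - z‖ ^ 2
        = ‖m - z‖ ^ 2 + 2 * t * I + t ^ 2 * Q := by
      have e1 : (1 - t) • m + t • w - z = (m - z) + t • (w - m) := by
        rw [sub_smul, smul_sub, one_smul]; abel
      rw [e1, norm_add_sq_real, real_inner_smul_right, norm_smul]
      simp only [Real.norm_eq_abs, mul_pow, sq_abs, hI, hQ]
      ring
    have expand : (‖m - z‖ ^ 2 + 2 * t * I + t ^ 2 * Q) / (2 * c)
        = ‖m - z‖ ^ 2 / (2 * c) + t * (I / c) + t * (t * (Q / (2 * c))) := by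
      field_simp
    rw [hnorm, expand] at hwt
    have h' : t * g m ≤ t * (g w + I / c + t * (Q / (2 * c))) := by nlinarith [hwt, hconv]
    exact le_of_mul_le_mul_left h' ht0
  by_contra hcon
  push_neg at hcon
  set ε := g m - (g w + I / c) with hε
  have hε0 : 0 < ε := sub_pos.mpr hcon
  set t := min 1 (ε / (2 * (Q / (2 * c) + 1))) with htd
  have hD : 0 < Q / (2 * c) + 1 := by positivity
  have ht0 : 0 < t := lt_min one_pos (by positivity)
  have ht1 : t ≤ 1 := min_le_left _ _
  have hk := key t ht0 ht1
  have htC : t * (Q / (2 * c)) ≤ ε / 2 := by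
    have h1 : t ≤ ε / (2 * (Q / (2 * c) + 1)) := min_le_right _ _
    have h2 : t * (Q / (2 * c)) ≤ (ε / (2 * (Q / (2 * c) + 1))) * (Q / (2 * c) + 1) :=
      mul_le_mul h1 (by linarith) (by positivity) (by positivity)
    have h3 : (ε / (2 * (Q / (2 * c) + 1))) * (Q / (2 * c) + 1) = ε / 2 := by
      field_simp
    linarith
  linarith
-- Descent lemma
theorem descent_lem {n : ℕ} {L : ℝ} (hL : 0 < L)
    (f : EuclideanSpace ℝ (Fin n) → ℝ) (f' : EuclideanSpace ℝ (Fin n) → EuclideanSpace ℝ (Fin n))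
    (hf : ∀ x, HasGradientAt f (f' x) x)
    (hlip : ∀ x y, ‖f' x - f' y‖ ≤ L * ‖x - y‖)
    (x y : EuclideanSpace ℝ (Fin n)) :
    f y ≤ f x + ⟪f' x, y - x⟫ + L / 2 * ‖y - x‖ ^ 2 := by
  set v := y - x with hv
  set φ : ℝ → ℝ := fun t => f (x + t • v) - t * ⟪f' x, v⟫ - t ^ 2 * (L / 2) * ‖v‖ ^ 2 with hφ
  have hder : ∀ t : ℝ, HasDerivAt φ (⟪f' (x + t • v), v⟫ - ⟪f' x, v⟫ - t * L * ‖v‖ ^ 2) t := by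
    intro t
    have hγ : HasDerivAt (fun t : ℝ => x + t • v) v t := by
      simpa using ((hasDerivAt_id t).smul_const v).const_add x
    have hc : HasDerivAt (fun t : ℝ => f (x + t • v)) ⟪f' (x + t • v), v⟫ t := by
      have := ((hf (x + t • v)).hasFDerivAt).comp_hasDerivAt t hγ
      simp at this
      exact this
    have h1 : HasDerivAt (fun t : ℝ => t * ⟪f' x, v⟫) ⟪f' x, v⟫ t := by
      simpa using (hasDerivAt_id t).mul_const ⟪f' x, v⟫
    have h2 : HasDerivAt (fun t : ℝ => t ^ 2 * (L / 2) * ‖v‖ ^ 2)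
        (t * L * ‖v‖ ^ 2) t := by
      have : HasDerivAt (fun t : ℝ => t ^ 2) (2 * t) t := by
        simpa using hasDerivAt_pow 2 t
      have := (this.mul_const (L / 2)).mul_const (‖v‖ ^ 2)
      exact this.congr_deriv (by ring)
    exact (hc.sub h1).sub h2
  have hdiff : Differentiable ℝ φ := fun t => (hder t).differentiableAt
  have hmono : AntitoneOn φ (Set.Icc (0:ℝ) 1) := by
    apply antitoneOn_of_deriv_nonpos (convex_Icc 0 1) hdiff.continuous.continuousOn
      hdiff.differentiableOn
    intro t ht
    rw [interior_Icc] at ht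
    rw [(hder t).deriv]
    have h1 : ⟪f' (x + t • v) - f' x, v⟫ ≤ ‖f' (x + t • v) - f' x‖ * ‖v‖ :=
      real_inner_le_norm _ _
    have h2 : ‖f' (x + t • v) - f' x‖ ≤ L * (t * ‖v‖) := by
      have := hlip (x + t • v) x
      simpa [norm_smul, abs_of_pos ht.1, mul_assoc] using this
    have h3 : ⟪f' (x + t • v), v⟫ - ⟪f' x, v⟫ = ⟪f' (x + t • v) - f' x, v⟫ := by
      rw [inner_sub_left]
    rw [h3]
    nlinarith [norm_nonneg v, h1.trans (by nlinarith [norm_nonneg v] : ‖f' (x + t • v) - f' x‖ * ‖v‖ ≤ L * (t * ‖v‖) * ‖v‖)]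
  have h01 : φ 1 ≤ φ 0 := hmono (by norm_num) (by norm_num) (by norm_num)
  simp only [hφ, one_smul, zero_smul, add_zero, one_pow, one_mul, pow_two, zero_mul,
    mul_zero, sub_zero, zero_pow] at h01
  have : x + v = y := by rw [hv]; abel
  rw [this] at h01
  linarith


theorem sufficient_decrease (n : ℕ) (L : ℝ) (hL : 0 < L)
    (f : EuclideanSpace ℝ (Fin n) → ℝ) (f' : EuclideanSpace ℝ (Fin n) → EuclideanSpace ℝ (Fin n))
    (hf : ∀ x, HasGradientAt f (f' x) x)
    (hlip : ∀ x y, ‖f' x - f' y‖ ≤ L * ‖x - y‖)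
    (g : EuclideanSpace ℝ (Fin n) → ℝ) (hg : ConvexOn ℝ Set.univ g)
    (s α : ℝ) (hs : 0 < s) (hsα : s ≤ α) (hα : α ≤ 1 / L) (hsL : s * L < 1)
    (x y xp : EuclideanSpace ℝ (Fin n))
    (hy : ∀ w, g y + ‖y - (x - s • f' x)‖ ^ 2 / (2 * s) ≤ g w + ‖w - (x - s • f' x)‖ ^ 2 / (2 * s))
    (hxp : ∀ w, g xp + ‖xp - (x - α • f' y)‖ ^ 2 / (2 * α) ≤ g w + ‖w - (x - α • f' y)‖ ^ 2 / (2 * α)) :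
    (f x + g x) - (f xp + g xp) ≥ (1 / (2 * α)) * ‖x - xp‖ ^ 2 := by
  have hα0 : 0 < α := lt_of_lt_of_le hs hsα
  set a := f' x with ha
  set b := f' y with hb
  set P : ℝ := ‖y - x‖ ^ 2 with hP
  set Q : ℝ := ‖xp - y‖ ^ 2 with hQdef
  set T : ℝ := ⟪y - x, xp - y⟫ with hT
  have hP0 : 0 ≤ P := by positivity
  have hQ0 : 0 ≤ Q := by positivity
  -- prox inequality for y at w = x
  have h1 : g y ≤ g x + (-P - s * ⟪a, y - x⟫) / s := by
    have := prox_subgrad g hg s hs y (x - s • a) hy x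
    have e1 : ⟪y - (x - s • a), x - y⟫ = -P - s * ⟪a, y - x⟫ := by
      have e0 : y - (x - s • a) = (y - x) + s • a := by abel
      have e0' : x - y = -(y - x) := by abel
      rw [e0, e0', inner_add_left, inner_neg_right, inner_neg_right,
        real_inner_smul_left, real_inner_self_eq_norm_sq, hP]
      ring
    rwa [e1] at this
  -- prox inequality for xp at w = y
  have h2 : g xp ≤ g y + (-T - Q - α * ⟪b, xp - y⟫) / α := by
    have := prox_subgrad g hg α hα0 xp (x - α • b) hxp y
    have e2 : ⟪xp - (x - α • b), y - xp⟫ = -T - Q - α * ⟪b, xp - y⟫ := by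
      have e0 : xp - (x - α • b) = ((y - x) + (xp - y)) + α • b := by abel
      have e0' : y - xp = -(xp - y) := by abel
      rw [e0, e0', inner_add_left, inner_add_left, inner_neg_right, inner_neg_right,
        inner_neg_right, real_inner_smul_left, real_inner_self_eq_norm_sq, hT, hQdef]
      ring
    rwa [e2] at this
  -- descent lemma
  have h3 : f y ≤ f x + ⟪a, y - x⟫ + L / 2 * P :=
    descent_lem hL f f' hf hlip x y
  have h4 : f xp ≤ f y + ⟪b, xp - y⟫ + L / 2 * Q :=
    descent_lem hL f f' hf hlip y xp
  -- norm identity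
  have hnorm : ‖x - xp‖ ^ 2 = P + 2 * T + Q := by
    have e0 : x - xp = -((y - x) + (xp - y)) := by abel
    rw [e0, norm_neg, norm_add_sq_real, hP, hQdef, hT]
  rw [ge_iff_le, hnorm]
  have hLα : L * α ≤ 1 := by
    have := (le_div_iff₀ hL).mp hα
    linarith
  -- final arithmetic
  have harith : 1 / (2 * α) * (P + 2 * T + Q)
      ≤ P / s + (T + Q) / α - L / 2 * (P + Q) := by
    rw [← sub_nonneg]
    have key : P / s + (T + Q) / α - L / 2 * (P + Q) - 1 / (2 * α) * (P + 2 * T + Q)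
        = P * (1 / s - 1 / α) + (1 - L * α) / (2 * α) * (P + Q) := by
      field_simp
      ring
    rw [key]
    have c1 : 0 ≤ 1 / s - 1 / α := by
      rw [sub_nonneg]
      exact one_div_le_one_div_of_le hs hsα
    have c2 : 0 ≤ (1 - L * α) / (2 * α) := by
      apply div_nonneg (by linarith) (by linarith)
    have := mul_nonneg c2 (by linarith : (0:ℝ) ≤ P + Q)
    nlinarith [mul_nonneg hP0 c1]
  have hsum : P / s + (T + Q) / α - L / 2 * (P + Q)
      ≤ (f x + g x) - (f xp + g xp) := by
    have d1 : (-P - s * ⟪a, y - x⟫) / s = -(P / s) - ⟪a, y - x⟫ := by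
      field_simp
    have d2 : (-T - Q - α * ⟪b, xp - y⟫) / α = -((T + Q) / α) - ⟪b, xp - y⟫ := by
      field_simp
      ring
    rw [d1] at h1
    rw [d2] at h2
    linarith
  linarith
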